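/- If u is an inner function with u(0) = 0, then the dual compressed shift D_u on K_u^⊥ is unitarily equivalent to S ⊕ S^* on H^2 ⊕ H^2, where S is the unilateral shift and S^* the backward shift. Consequently, for any two inner functions u, v with u(0) = v(0) = 0, D_u and D_v are unitarily equivalent. -/

import Mathlib

open MeasureTheory Complex AddCircle

noncomputable section

namespace Paper

/-- The period `2π`. -/
abbrev T : ℝ := 2 * Real.pi

instance : Fact (0 < T) := ⟨by positivity⟩

/-- Normalized Lebesgue (Haar) measure on the circle. -/
abbrev μ : Measure (AddCircle T) := haarAddCircle

/-- The space `L²(𝕋, dm)`. -/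
abbrev L2 : Type := Lp ℂ 2 μ

lemma memLp_mul {u : AddCircle T → ℂ} (hm : AEStronglyMeasurable u μ)
    (hb : ∀ᵐ x ∂μ, ‖u x‖ ≤ 1) (f : L2) :
    MemLp (fun x => u x * (f : AddCircle T → ℂ) x) 2 μ := by
  refine (Lp.memLp f).of_le (hm.mul (Lp.aestronglyMeasurable f)) ?_
  filter_upwards [hb] with x hx
  calc ‖u x * (f : AddCircle T → ℂ) x‖ = ‖u x‖ * ‖(f : AddCircle T → ℂ) x‖ := norm_mul _ _
    _ ≤ 1 * ‖(f : AddCircle T → ℂ) x‖ := by gcongr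
    _ = ‖(f : AddCircle T → ℂ) x‖ := one_mul _

/-- Multiplication by a measurable function bounded by `1`, as a bounded operator on `L²`. -/
def mulCLM (u : AddCircle T → ℂ) (hm : AEStronglyMeasurable u μ)
    (hb : ∀ᵐ x ∂μ, ‖u x‖ ≤ 1) : L2 →L[ℂ] L2 :=
  LinearMap.mkContinuous
    { toFun := fun f => (memLp_mul hm hb f).toLp _
      map_add' := fun f g => by
        show MemLp.toLp _ (memLp_mul hm hb (f + g)) = _
        have h : (fun x => u x * ((f + g : L2) : AddCircle T → ℂ) x)
            =ᵐ[μ] (fun x => u x * (f : AddCircle T → ℂ) x)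
              + (fun x => u x * (g : AddCircle T → ℂ) x) := by
          filter_upwards [Lp.coeFn_add f g] with x hx
          simp only [Pi.add_apply, hx, mul_add]
        rw [MemLp.toLp_congr (memLp_mul hm hb (f + g))
          ((memLp_mul hm hb f).add (memLp_mul hm hb g)) h, MemLp.toLp_add]
      map_smul' := fun c f => by
        have h : (fun x => u x * ((c • f : L2) : AddCircle T → ℂ) x)
            =ᵐ[μ] c • (fun x => u x * (f : AddCircle T → ℂ) x) := by
          filter_upwards [Lp.coeFn_smul c f] with x hx
          simp only [Pi.smul_apply, hx, smul_eq_mul]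
          ring
        simp only [RingHom.id_apply]
        rw [MemLp.toLp_congr (memLp_mul hm hb (c • f))
          ((memLp_mul hm hb f).const_smul c) h, MemLp.toLp_const_smul] }
    1
    (fun f => by
      simp only [LinearMap.coe_mk, AddHom.coe_mk, one_mul]
      rw [Lp.norm_toLp]
      have h1 : eLpNorm (fun x => u x * (f : AddCircle T → ℂ) x) 2 μ
          ≤ eLpNorm (f : AddCircle T → ℂ) 2 μ := by
        refine eLpNorm_mono_ae ?_
        filter_upwards [hb] with x hx
        calc ‖u x * (f : AddCircle T → ℂ) x‖
            = ‖u x‖ * ‖(f : AddCircle T → ℂ) x‖ := norm_mul _ _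
          _ ≤ 1 * ‖(f : AddCircle T → ℂ) x‖ := by gcongr
          _ = ‖(f : AddCircle T → ℂ) x‖ := one_mul _
      calc (eLpNorm (fun x => u x * (f : AddCircle T → ℂ) x) 2 μ).toReal
          ≤ (eLpNorm (f : AddCircle T → ℂ) 2 μ).toReal :=
            ENNReal.toReal_mono (Lp.eLpNorm_ne_top f) h1
        _ = ‖f‖ := (Lp.norm_def f).symm)

lemma memLp_conj (f : L2) :
    MemLp (fun x => (starRingEnd ℂ) ((f : AddCircle T → ℂ) x)) 2 μ := by
  refine (Lp.memLp f).of_le ?_ ?_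
  · exact Complex.continuous_conj.comp_aestronglyMeasurable (Lp.aestronglyMeasurable f)
  · filter_upwards with x
    simp

/-- Complex conjugation on `L²`. -/
def conjL2 (f : L2) : L2 := (memLp_conj f).toLp _

/-- The independent variable `z = e^{iθ}` as a function on the circle. -/
def zfun : AddCircle T → ℂ := fun x => fourier 1 x

lemma zfun_meas : AEStronglyMeasurable zfun μ :=
  ((map_continuous (fourier (T := T) 1)).aestronglyMeasurable)

lemma zfun_norm : ∀ᵐ x ∂μ, ‖zfun x‖ ≤ 1 := by
  filter_upwards with x
  simp [zfun, Circle.norm_coe]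

/-- Multiplication by `z` (the bilateral shift `M` on `L²`). -/
def Mz : L2 →L[ℂ] L2 := mulCLM zfun zfun_meas zfun_norm

/-- Multiplication by `conj z`. -/
def Mzbar : L2 →L[ℂ] L2 :=
  mulCLM (fun x => (starRingEnd ℂ) (zfun x))
    (Complex.continuous_conj.comp_aestronglyMeasurable zfun_meas)
    (by filter_upwards with x; simp [zfun, Circle.norm_coe])

/-- The Hardy space `H² = {f ∈ L² : f̂(n) = 0 for all n < 0}`. -/
def H2 : Submodule ℂ L2 where
  carrier := {f | ∀ n : ℤ, n < 0 → fourierBasis.repr f n = 0}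
  add_mem' := by
    intro f g hf hg n hn
    simp [map_add, hf n hn, hg n hn]
  zero_mem' := by intro n hn; simp
  smul_mem' := by
    intro c f hf n hn
    simp [_root_.map_smul, hf n hn]

lemma continuous_coeff (n : ℤ) :
    Continuous fun f : L2 => fourierBasis.repr f n := by
  rw [Metric.continuous_iff]
  intro f ε hε
  refine ⟨ε, hε, fun g hg => ?_⟩
  have h1 : fourierBasis.repr g n - fourierBasis.repr f n = fourierBasis.repr (g - f) n := by
    simp [map_sub]
  have h2 : ‖fourierBasis.repr (g - f) n‖ ≤ ‖fourierBasis.repr (g - f)‖ :=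
    lp.norm_apply_le_norm (by norm_num) _ n
  have h3 : ‖fourierBasis.repr (g - f)‖ = ‖g - f‖ :=
    fourierBasis.repr.norm_map _
  calc dist (fourierBasis.repr g n) (fourierBasis.repr f n)
      = ‖fourierBasis.repr (g - f) n‖ := by rw [dist_eq_norm, h1]
    _ ≤ ‖g - f‖ := by rw [← h3]; exact h2
    _ = dist g f := (dist_eq_norm g f).symm
    _ < ε := hg

lemma H2_isClosed : IsClosed (H2 : Set L2) := by
  have : (H2 : Set L2) =
      ⋂ n ∈ {m : ℤ | m < 0}, {f : L2 | fourierBasis.repr f n = 0} := by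
    ext f
    simp only [Set.mem_iInter, Set.mem_setOf_eq]
    rfl
  rw [this]
  exact isClosed_biInter fun n _ => isClosed_eq (continuous_coeff n) continuous_const

instance : CompleteSpace H2 := H2_isClosed.completeSpace_coe

/-- The Riesz projection `P⁺` of `L²` onto `H²`. -/
def Pp : L2 →L[ℂ] L2 := H2.subtypeL ∘L H2.orthogonalProjectionOnto

/-- The projection `P⁻ = I − P⁺` of `L²` onto `conj(H²₀)`. -/
def Pm : L2 →L[ℂ] L2 := ContinuousLinearMap.id ℂ L2 - Pp

/-- `conj(H²₀) = {f ∈ L² : f̂(n) = 0 for all n ≥ 0}`, the orthogonal complement of `H²`. -/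
def Hm : Submodule ℂ L2 where
  carrier := {f | ∀ n : ℤ, 0 ≤ n → fourierBasis.repr f n = 0}
  add_mem' := by
    intro f g hf hg n hn
    simp [map_add, hf n hn, hg n hn]
  zero_mem' := by intro n hn; simp
  smul_mem' := by
    intro c f hf n hn
    simp [_root_.map_smul, hf n hn]

/-- The constant function `1` as an element of `L²`. -/
def oneL2 : L2 := (memLp_const (1 : ℂ)).toLp _

/-- An inner function: a bounded measurable unimodular function on the circle whose
negative Fourier coefficients vanish. -/
structure InnerData where
  u : AddCircle T → ℂ
  meas : AEStronglyMeasurable u μ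
  unim : ∀ᵐ x ∂μ, ‖u x‖ = 1
  anal : ∀ n : ℤ, n < 0 → fourierCoeff u n = 0

namespace InnerData

variable (U : InnerData)

lemma bd : ∀ᵐ x ∂μ, ‖U.u x‖ ≤ 1 := by
  filter_upwards [U.unim] with x hx
  rw [hx]

/-- Multiplication by `u`: the operator `M_u` on `L²`. -/
def M : L2 →L[ℂ] L2 := mulCLM U.u U.meas U.bd

/-- Multiplication by `conj u`: the operator `M_{conj u}` on `L²`. -/
def Mc : L2 →L[ℂ] L2 :=
  mulCLM (fun x => (starRingEnd ℂ) (U.u x))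
    (Complex.continuous_conj.comp_aestronglyMeasurable U.meas)
    (by filter_upwards [U.bd] with x hx; simpa using hx)

/-- `u` as an element of `L²`. -/
def toL2 : L2 :=
  (memLp_top_of_bound U.meas 1 U.bd |>.mono_exponent le_top).toLp _

/-- The value `u(0)` of (the analytic extension of) `u` at the origin, i.e. the mean of `u`. -/
def a0 : ℂ := fourierCoeff U.u 0

/-- The subspace `uH²`. -/
def uH2 : Submodule ℂ L2 := Submodule.map (U.M : L2 →ₗ[ℂ] L2) H2

/-- The model space `K_u = H² ∩ (uH²)ᗮ`. -/
def Ku : Submodule ℂ L2 := H2 ⊓ (U.uH2)ᗮ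

lemma Ku_isClosed : IsClosed (U.Ku : Set L2) := by
  have : (U.Ku : Set L2) = (H2 : Set L2) ∩ ((U.uH2)ᗮ : Set L2) := rfl
  rw [this]
  exact H2_isClosed.inter (U.uH2).isClosed_orthogonal

instance : CompleteSpace U.Ku := U.Ku_isClosed.completeSpace_coe

/-- `K_u^⊥`, the orthogonal complement of the model space in `L²`. -/
def KP : Submodule ℂ L2 := (U.Ku)ᗮ

instance : CompleteSpace U.KP := (U.Ku).isClosed_orthogonal.completeSpace_coe

/-- The orthogonal projection `P_u : L² → K_u` (viewed as an operator on `L²`). -/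
def Pu : L2 →L[ℂ] L2 := (U.Ku).subtypeL ∘L U.Ku.orthogonalProjectionOnto

/-- The dual of the compressed shift: `D_u = (I − P_u) M_z |_{K_u^⊥}`. -/
def Du : U.KP →L[ℂ] U.KP :=
  U.KP.orthogonalProjectionOnto ∘L Mz ∘L (U.KP).subtypeL

/-- The conjugation `C_u f = u · conj(z f)` on `L²`. -/
def C (f : L2) : L2 := U.M (conjL2 (Mz f))

/-- The reproducing kernel of `K_u` at `0`: `k₀ᵘ = 1 − conj(u(0))·u`. -/
def k0 : L2 := oneL2 - (starRingEnd ℂ) U.a0 • U.toL2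

/-- The similarity `V_u = P⁻ + (conj u/conj u(0)) P⁺` of the paper. -/
def V : L2 →L[ℂ] L2 := Pm + ((starRingEnd ℂ) U.a0)⁻¹ • (U.Mc ∘L Pp)

/-- The inverse similarity `V_u⁻¹ = P⁻ + conj(u(0)) u P⁺`. -/
def Vinv : L2 →L[ℂ] L2 := Pm + (starRingEnd ℂ) U.a0 • (U.M ∘L Pp)

end InnerData

lemma Mz_mem_H2 {f : L2} (hf : f ∈ H2) : Mz f ∈ H2 := by
  intro n hn
  rw [fourierBasis_repr]
  have hcoe : (Mz f : AddCircle T → ℂ) =ᵐ[μ] fun x => zfun x * (f : AddCircle T → ℂ) x :=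
    MemLp.coeFn_toLp (memLp_mul zfun_meas zfun_norm f)
  have h1 : fourierCoeff (Mz f : AddCircle T → ℂ) n
      = fourierCoeff (f : AddCircle T → ℂ) (n - 1) := by
    unfold fourierCoeff
    rw [integral_congr_ae (by filter_upwards [hcoe] with x hx; rw [hx])]
    refine integral_congr_ae ?_
    filter_upwards with x
    have : fourier (-n) x * zfun x = fourier (-(n - 1)) x := by
      unfold zfun
      rw [show (-(n - 1) : ℤ) = -n + 1 by ring, fourier_add]
    simp only [smul_eq_mul]
    calc fourier (-n) x * (zfun x * (f : AddCircle T → ℂ) x)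
        = (fourier (-n) x * zfun x) * (f : AddCircle T → ℂ) x := by ring
      _ = fourier (-(n - 1)) x * (f : AddCircle T → ℂ) x := by rw [this]
  rw [h1]
  have := hf (n - 1) (by omega)
  rwa [fourierBasis_repr] at this

/-- The unilateral shift `S` on `H²`. -/
def Shift : H2 →L[ℂ] H2 :=
  (Mz ∘L H2.subtypeL).codRestrict H2 (fun x => Mz_mem_H2 x.2)


/-! ### Auxiliary development -/

open ComplexConjugate

local notation "⟪" x ", " y "⟫" => @inner ℂ _ _ x y

lemma fourierCoeff_congr_ae {f g : AddCircle T → ℂ} (h : f =ᵐ[μ] g) (n : ℤ) :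
    fourierCoeff f n = fourierCoeff g n := by
  unfold fourierCoeff
  refine integral_congr_ae ?_
  filter_upwards [h] with x hx
  simp only [hx]

lemma repr_eq_fourierCoeff (f : L2) (n : ℤ) :
    fourierBasis.repr f n = fourierCoeff (f : AddCircle T → ℂ) n :=
  fourierBasis_repr f n

lemma mulCLM_coeFn (u : AddCircle T → ℂ) (hm : AEStronglyMeasurable u μ)
    (hb : ∀ᵐ x ∂μ, ‖u x‖ ≤ 1) (f : L2) :
    (mulCLM u hm hb f : AddCircle T → ℂ) =ᵐ[μ] fun x => u x * (f : AddCircle T → ℂ) x :=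
  (memLp_mul hm hb f).coeFn_toLp

lemma conjL2_coeFn (f : L2) :
    (conjL2 f : AddCircle T → ℂ) =ᵐ[μ] fun x => conj ((f : AddCircle T → ℂ) x) :=
  (memLp_conj f).coeFn_toLp

lemma oneL2_coeFn : (oneL2 : AddCircle T → ℂ) =ᵐ[μ] fun _ => 1 :=
  (memLp_const (1 : ℂ)).coeFn_toLp

lemma Mz_coeFn (f : L2) :
    (Mz f : AddCircle T → ℂ) =ᵐ[μ] fun x => zfun x * (f : AddCircle T → ℂ) x :=
  mulCLM_coeFn _ _ _ f

lemma repr_Mz (f : L2) (n : ℤ) :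
    fourierBasis.repr (Mz f) n = fourierBasis.repr f (n - 1) := by
  rw [repr_eq_fourierCoeff, repr_eq_fourierCoeff]
  rw [fourierCoeff_congr_ae (Mz_coeFn f) n]
  unfold fourierCoeff
  refine integral_congr_ae (Filter.Eventually.of_forall fun x => ?_)
  have h : fourier (-n) x * zfun x = fourier (-(n - 1)) x := by
    unfold zfun
    rw [show (-(n - 1) : ℤ) = -n + 1 by ring, fourier_add]
  simp only [smul_eq_mul]
  calc fourier (-n) x * (zfun x * (f : AddCircle T → ℂ) x)
      = (fourier (-n) x * zfun x) * (f : AddCircle T → ℂ) x := by ring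
    _ = fourier (-(n - 1)) x * (f : AddCircle T → ℂ) x := by rw [h]

lemma repr_conjL2 (f : L2) (n : ℤ) :
    fourierBasis.repr (conjL2 f) n = conj (fourierBasis.repr f (-n)) := by
  rw [repr_eq_fourierCoeff, repr_eq_fourierCoeff]
  rw [fourierCoeff_congr_ae (conjL2_coeFn f) n]
  unfold fourierCoeff
  rw [← integral_conj]
  refine integral_congr_ae (Filter.Eventually.of_forall fun x => ?_)
  simp only [smul_eq_mul, map_mul, Complex.conj_conj]
  rw [← fourier_neg, neg_neg]

lemma oneL2_eq_fourierBasis : oneL2 = (fourierBasis : HilbertBasis ℤ ℂ L2) 0 := by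
  refine Lp.ext ?_
  have h1 : ((fourierBasis : HilbertBasis ℤ ℂ L2) 0 : AddCircle T → ℂ) =ᵐ[μ] ⇑(fourier 0) := by
    rw [coe_fourierBasis]
    exact coeFn_fourierLp 2 0
  filter_upwards [oneL2_coeFn, h1] with x hx hy
  rw [hx, hy, fourier_zero]

set_option maxRecDepth 4000 in
lemma repr_fourierBasis (m n : ℤ) :
    fourierBasis.repr ((fourierBasis : HilbertBasis ℤ ℂ L2) m) n = if n = m then 1 else 0 := by
  rw [← HilbertBasis.repr_symm_single, LinearIsometryEquiv.apply_symm_apply, lp.single_apply]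
  by_cases h : n = m
  · subst h
    rw [Pi.single_eq_same, if_pos rfl]
  · rw [Pi.single_eq_of_ne h, if_neg h]

lemma repr_oneL2 (n : ℤ) :
    fourierBasis.repr oneL2 n = if n = 0 then 1 else 0 := by
  rw [oneL2_eq_fourierBasis, repr_fourierBasis]

lemma inner_eq_tsum_coeff (f g : L2) :
    ⟪f, g⟫ = ∑' n : ℤ, conj (fourierBasis.repr f n) * fourierBasis.repr g n := by
  rw [← (fourierBasis : HilbertBasis ℤ ℂ L2).repr.inner_map_map f g, lp.inner_eq_tsum]
  exact tsum_congr fun n => by rw [RCLike.inner_apply]; exact mul_comm _ _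

lemma repr_apply_eq_inner (f : L2) (n : ℤ) :
    fourierBasis.repr f n = ⟪(fourierBasis : HilbertBasis ℤ ℂ L2) n, f⟫ :=
  HilbertBasis.repr_apply_apply _ f n

lemma fourierBasis_mem_H2 {n : ℤ} (hn : 0 ≤ n) :
    ((fourierBasis : HilbertBasis ℤ ℂ L2) n) ∈ H2 := by
  intro m hm
  rw [repr_fourierBasis]
  simp only [ite_eq_right_iff]
  intro h; omega

namespace InnerData

variable (U : InnerData)

lemma M_coeFn (f : L2) :
    (U.M f : AddCircle T → ℂ) =ᵐ[μ] fun x => U.u x * (f : AddCircle T → ℂ) x :=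
  mulCLM_coeFn _ _ _ f

lemma Mc_coeFn (f : L2) :
    (U.Mc f : AddCircle T → ℂ) =ᵐ[μ] fun x => conj (U.u x) * (f : AddCircle T → ℂ) x :=
  mulCLM_coeFn _ _ _ f

lemma conj_mul_self_eq_one {z : ℂ} (hz : ‖z‖ = 1) : conj z * z = 1 := by
  rw [mul_comm, Complex.mul_conj', hz]
  norm_num

lemma inner_M_left (f g : L2) : ⟪U.M f, g⟫ = ⟪f, U.Mc g⟫ := by
  rw [L2.inner_def, L2.inner_def]
  refine integral_congr_ae ?_
  filter_upwards [U.M_coeFn f, U.Mc_coeFn g] with x hx hy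
  rw [hx, hy, RCLike.inner_apply, RCLike.inner_apply]
  simp only [map_mul]
  ring

lemma inner_M_M (f g : L2) : ⟪U.M f, U.M g⟫ = ⟪f, g⟫ := by
  rw [L2.inner_def, L2.inner_def]
  refine integral_congr_ae ?_
  filter_upwards [U.M_coeFn f, U.M_coeFn g, U.unim] with x hx hy hu
  rw [hx, hy, RCLike.inner_apply, RCLike.inner_apply]
  simp only [map_mul]
  have h1 : conj (U.u x) * U.u x = 1 := conj_mul_self_eq_one hu
  calc U.u x * (g : AddCircle T → ℂ) x * (conj (U.u x) * conj ((f : AddCircle T → ℂ) x))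
      = (conj (U.u x) * U.u x) * ((g : AddCircle T → ℂ) x * conj ((f : AddCircle T → ℂ) x)) := by
        ring
    _ = (g : AddCircle T → ℂ) x * conj ((f : AddCircle T → ℂ) x) := by rw [h1, one_mul]

lemma fourierBasis_coeFn (n : ℤ) :
    (((fourierBasis : HilbertBasis ℤ ℂ L2) n : L2) : AddCircle T → ℂ) =ᵐ[μ] ⇑(fourier n) := by
  rw [coe_fourierBasis]
  exact coeFn_fourierLp 2 n

lemma repr_Mc_fourierBasis (n m : ℤ) :
    fourierBasis.repr (U.Mc ((fourierBasis : HilbertBasis ℤ ℂ L2) n)) m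
      = conj (fourierCoeff U.u (n - m)) := by
  rw [repr_eq_fourierCoeff]
  have h1 : (U.Mc ((fourierBasis : HilbertBasis ℤ ℂ L2) n) : AddCircle T → ℂ)
      =ᵐ[μ] fun x => conj (U.u x) * fourier n x := by
    filter_upwards [U.Mc_coeFn ((fourierBasis : HilbertBasis ℤ ℂ L2) n),
      fourierBasis_coeFn n] with x hx hy
    rw [hx, hy]
  rw [fourierCoeff_congr_ae h1 m]
  unfold fourierCoeff
  rw [← integral_conj]
  refine integral_congr_ae (Filter.Eventually.of_forall fun x => ?_)
  simp only [smul_eq_mul, map_mul]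
  have h2 : conj (fourier (-(n - m)) x) = fourier (n - m) x := by
    rw [fourier_neg, Complex.conj_conj]
  rw [h2, show (n - m : ℤ) = n + -m by ring, fourier_add]
  ring

lemma inner_fourierBasis_M {n : ℤ} (hn : n ≤ 0)
    (ha : n = 0 → fourierCoeff U.u 0 = 0) {f : L2} (hf : f ∈ H2) :
    ⟪(fourierBasis : HilbertBasis ℤ ℂ L2) n, U.M f⟫ = 0 := by
  have h1 : ⟪(fourierBasis : HilbertBasis ℤ ℂ L2) n, U.M f⟫
      = ⟪U.Mc ((fourierBasis : HilbertBasis ℤ ℂ L2) n), f⟫ := by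
    rw [← inner_conj_symm, U.inner_M_left, inner_conj_symm]
  rw [h1, inner_eq_tsum_coeff]
  have h2 : ∀ m : ℤ,
      conj (fourierBasis.repr (U.Mc ((fourierBasis : HilbertBasis ℤ ℂ L2) n)) m)
        * fourierBasis.repr f m = 0 := by
    intro m
    by_cases hm : m < 0
    · rw [hf m hm, mul_zero]
    · rw [U.repr_Mc_fourierBasis n m, Complex.conj_conj]
      have h3 : fourierCoeff U.u (n - m) = 0 := by
        rcases lt_or_eq_of_le hn with h | h
        · exact U.anal _ (by omega)
        · rcases eq_or_lt_of_le (not_lt.mp hm) with h' | h'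
          · rw [h, ← h']; simpa using ha h
          · exact U.anal _ (by omega)
      rw [h3, zero_mul]
  rw [tsum_congr h2, tsum_zero]

lemma M_mem_H2 {f : L2} (hf : f ∈ H2) : U.M f ∈ H2 := by
  intro n hn
  rw [repr_apply_eq_inner]
  exact U.inner_fourierBasis_M (le_of_lt hn) (by omega) hf

lemma oneL2_mem_H2 : oneL2 ∈ H2 := by
  intro n hn
  rw [repr_oneL2]
  simp only [ite_eq_right_iff]
  intro h; omega

lemma oneL2_mem_Ku (h0 : U.a0 = 0) : oneL2 ∈ U.Ku := by
  refine Submodule.mem_inf.mpr ⟨oneL2_mem_H2, ?_⟩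
  rw [Submodule.mem_orthogonal]
  intro v hv
  obtain ⟨h, hh, rfl⟩ := hv
  have : (U.M : L2 →ₗ[ℂ] L2) h = U.M h := rfl
  rw [this, ← inner_conj_symm]
  rw [oneL2_eq_fourierBasis, U.inner_fourierBasis_M le_rfl (fun _ => h0) hh, map_zero]

end InnerData

/-! ### The flip map -/

def flipPerm : Equiv.Perm ℤ :=
  Function.Involutive.toPerm (fun n => -1 - n) (fun n => by ring)

@[simp] lemma flipPerm_apply (n : ℤ) : flipPerm n = -1 - n := rfl

lemma memℓp_flip (a : lp (fun _ : ℤ => ℂ) 2) :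
    Memℓp (fun n : ℤ => a (-1 - n)) 2 := by
  apply memℓp_gen
  have hs : Summable fun n : ℤ => ‖a n‖ ^ ENNReal.toReal 2 :=
    (memℓp_gen_iff (by norm_num)).1 (lp.memℓp a)
  have h2 := (flipPerm.summable_iff
    (f := fun n : ℤ => ‖a n‖ ^ ENNReal.toReal 2)).2 hs
  exact h2

/-- The flip `f(z) ↦ z̄ f(z̄)` on `L²`, exchanging coefficient `n` with `-1-n`. -/
def flipL2 (f : L2) : L2 :=
  fourierBasis.repr.symm ⟨fun n => fourierBasis.repr f (-1 - n), memℓp_flip _⟩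

lemma repr_flipL2 (f : L2) (n : ℤ) :
    fourierBasis.repr (flipL2 f) n = fourierBasis.repr f (-1 - n) := by
  unfold flipL2
  rw [LinearIsometryEquiv.apply_symm_apply]

lemma repr_ext {f g : L2} (h : ∀ n, fourierBasis.repr f n = fourierBasis.repr g n) :
    f = g :=
  fourierBasis.repr.injective (lp.ext (funext h))

lemma flipL2_add (f g : L2) : flipL2 (f + g) = flipL2 f + flipL2 g := by
  refine repr_ext fun n => ?_
  rw [repr_flipL2, map_add]
  simp only [lp.coeFn_add, Pi.add_apply, repr_flipL2, map_add]

lemma flipL2_smul (c : ℂ) (f : L2) : flipL2 (c • f) = c • flipL2 f := by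
  refine repr_ext fun n => ?_
  rw [repr_flipL2, _root_.map_smul]
  simp only [lp.coeFn_smul, Pi.smul_apply, repr_flipL2, _root_.map_smul]

lemma flipL2_zero : flipL2 (0 : L2) = 0 := by
  refine repr_ext fun n => ?_
  simp [repr_flipL2]

lemma inner_flipL2 (f g : L2) : ⟪flipL2 f, flipL2 g⟫ = ⟪f, g⟫ := by
  rw [inner_eq_tsum_coeff, inner_eq_tsum_coeff]
  have h := flipPerm.tsum_eq
    (f := fun n : ℤ => conj (fourierBasis.repr f n) * fourierBasis.repr g n)
  rw [← h]
  exact tsum_congr fun n => by rw [repr_flipL2, repr_flipL2, flipPerm_apply]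

lemma flipL2_fourierBasis (m : ℤ) :
    flipL2 ((fourierBasis : HilbertBasis ℤ ℂ L2) m)
      = (fourierBasis : HilbertBasis ℤ ℂ L2) (-1 - m) := by
  refine repr_ext fun n => ?_
  rw [repr_flipL2, repr_fourierBasis, repr_fourierBasis]
  congr 1
  simp only [eq_iff_iff]
  omega

lemma inner_H2_flipL2 {f g : L2} (hf : f ∈ H2) (hg : g ∈ H2) :
    ⟪f, flipL2 g⟫ = 0 := by
  rw [inner_eq_tsum_coeff]
  have h : ∀ n : ℤ, conj (fourierBasis.repr f n) * fourierBasis.repr (flipL2 g) n = 0 := by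
    intro n
    by_cases hn : n < 0
    · rw [hf n hn, map_zero, zero_mul]
    · rw [repr_flipL2, hg (-1 - n) (by omega), mul_zero]
  rw [tsum_congr h, tsum_zero]

/-! ### The backward shift and the adjoint of the shift -/

lemma Mzbar_coeFn (f : L2) :
    (Mzbar f : AddCircle T → ℂ) =ᵐ[μ] fun x => conj (zfun x) * (f : AddCircle T → ℂ) x :=
  mulCLM_coeFn _ _ _ f

lemma repr_Mzbar (f : L2) (n : ℤ) :
    fourierBasis.repr (Mzbar f) n = fourierBasis.repr f (n + 1) := by
  rw [repr_eq_fourierCoeff, repr_eq_fourierCoeff]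
  rw [fourierCoeff_congr_ae (Mzbar_coeFn f) n]
  unfold fourierCoeff
  refine integral_congr_ae (Filter.Eventually.of_forall fun x => ?_)
  have h : fourier (-n) x * conj (zfun x) = fourier (-(n + 1)) x := by
    unfold zfun
    rw [← fourier_neg, show (-(n + 1) : ℤ) = -n + -1 by ring, fourier_add]
  simp only [smul_eq_mul]
  calc fourier (-n) x * (conj (zfun x) * (f : AddCircle T → ℂ) x)
      = (fourier (-n) x * conj (zfun x)) * (f : AddCircle T → ℂ) x := by ring
    _ = fourier (-(n + 1)) x * (f : AddCircle T → ℂ) x := by rw [h]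

/-- The rank-one operator `f ↦ f̂(0) ⬝ 1`. -/
def coeff0 : L2 →L[ℂ] L2 :=
  (innerSL ℂ ((fourierBasis : HilbertBasis ℤ ℂ L2) 0)).smulRight oneL2

lemma coeff0_apply (f : L2) : coeff0 f = (fourierBasis.repr f 0) • oneL2 := by
  rw [repr_apply_eq_inner]
  rfl

lemma repr_coeff0 (f : L2) (n : ℤ) :
    fourierBasis.repr (coeff0 f) n
      = if n = 0 then fourierBasis.repr f 0 else 0 := by
  rw [coeff0_apply, _root_.map_smul]
  simp only [lp.coeFn_smul, Pi.smul_apply, smul_eq_mul, repr_oneL2]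
  by_cases h : n = 0 <;> simp [h]

/-- The backward shift `f ↦ (f - f̂(0))/z` on `L²`. -/
def backL2 : L2 →L[ℂ] L2 := Mzbar ∘L (ContinuousLinearMap.id ℂ L2 - coeff0)

lemma repr_backL2 (f : L2) (n : ℤ) :
    fourierBasis.repr (backL2 f) n
      = fourierBasis.repr f (n + 1) - (if n + 1 = 0 then fourierBasis.repr f 0 else 0) := by
  show fourierBasis.repr (Mzbar (f - coeff0 f)) n = _
  rw [repr_Mzbar, map_sub]
  simp only [lp.coeFn_sub, Pi.sub_apply, repr_coeff0]

lemma backL2_mem_H2 {f : L2} (hf : f ∈ H2) : backL2 f ∈ H2 := by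
  intro n hn
  rw [repr_backL2]
  by_cases h : n = -1
  · subst h; simp
  · rw [hf (n + 1) (by omega), if_neg (by omega), sub_zero]

/-- The backward shift `S^*` on `H²`. -/
def Bshift : H2 →L[ℂ] H2 :=
  (backL2 ∘L H2.subtypeL).codRestrict H2 (fun x => backL2_mem_H2 x.2)

lemma Bshift_coe (x : H2) : ((Bshift x : H2) : L2) = backL2 (x : L2) := rfl

lemma Shift_coe (y : H2) : ((Shift y : H2) : L2) = Mz (y : L2) := rfl

lemma adjoint_Shift_eq : ContinuousLinearMap.adjoint Shift = Bshift := by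
  symm
  rw [ContinuousLinearMap.eq_adjoint_iff]
  intro x y
  rw [Submodule.coe_inner, Submodule.coe_inner, Bshift_coe, Shift_coe]
  rw [inner_eq_tsum_coeff, inner_eq_tsum_coeff]
  rw [← (Equiv.addRight (1 : ℤ)).tsum_eq
    (fun n => conj (fourierBasis.repr (x : L2) n) * fourierBasis.repr (Mz (y : L2)) n)]
  refine tsum_congr fun n => ?_
  simp only [Equiv.coe_addRight, repr_backL2, repr_Mz, add_sub_cancel_right]
  by_cases h : n = -1
  · subst h
    rw [y.2 (-1) (by omega)]
    simp
  · rw [if_neg (by omega), sub_zero]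

lemma repr_adjoint_Shift (g : H2) (n : ℤ) :
    fourierBasis.repr ((ContinuousLinearMap.adjoint Shift g : H2) : L2) n
      = fourierBasis.repr (g : L2) (n + 1)
        - (if n + 1 = 0 then fourierBasis.repr (g : L2) 0 else 0) := by
  rw [adjoint_Shift_eq, Bshift_coe, repr_backL2]

/-! ### The unitary equivalence -/

namespace InnerData

variable (U : InnerData)

lemma Mz_M_comm (f : L2) : Mz (U.M f) = U.M (Mz f) := by
  refine Lp.ext ?_
  filter_upwards [Mz_coeFn (U.M f), U.M_coeFn f, U.M_coeFn (Mz f), Mz_coeFn f]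
    with x h1 h2 h3 h4
  rw [h1, h2, h3, h4]
  ring

/-- The linear map `(h, g) ↦ u·h + flip g` from `H² ⊕ H²` to `L²`. -/
def Jlin : WithLp 2 (↥H2 × ↥H2) →ₗ[ℂ] L2 where
  toFun x := U.M (((WithLp.equiv 2 (↥H2 × ↥H2)) x).1 : L2)
    + flipL2 ((((WithLp.equiv 2 (↥H2 × ↥H2)) x).2 : L2))
  map_add' x y := by
    simp only [WithLp.equiv_apply, WithLp.ofLp_add, Prod.fst_add, Prod.snd_add, Submodule.coe_add, map_add,
      flipL2_add]
    abel
  map_smul' c x := by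
    simp only [WithLp.equiv_apply, WithLp.ofLp_smul, Prod.smul_fst, Prod.smul_snd, Submodule.coe_smul,
      _root_.map_smul, flipL2_smul, smul_add, RingHom.id_apply]

lemma Jlin_apply (x : WithLp 2 (↥H2 × ↥H2)) :
    U.Jlin x = U.M (((WithLp.equiv 2 (↥H2 × ↥H2)) x).1 : L2)
      + flipL2 ((((WithLp.equiv 2 (↥H2 × ↥H2)) x).2 : L2)) := rfl

lemma inner_Jlin (x y : WithLp 2 (↥H2 × ↥H2)) : ⟪U.Jlin x, U.Jlin y⟫ = ⟪x, y⟫ := by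
  rw [Jlin_apply, Jlin_apply, inner_add_left, inner_add_right, inner_add_right]
  have hcross1 : ⟪U.M (((WithLp.equiv 2 (↥H2 × ↥H2)) x).1 : L2),
      flipL2 ((((WithLp.equiv 2 (↥H2 × ↥H2)) y).2 : L2))⟫ = 0 :=
    inner_H2_flipL2 (U.M_mem_H2 ((WithLp.equiv 2 (↥H2 × ↥H2)) x).1.2)
      ((WithLp.equiv 2 (↥H2 × ↥H2)) y).2.2
  have hcross2 : ⟪flipL2 ((((WithLp.equiv 2 (↥H2 × ↥H2)) x).2 : L2)),
      U.M (((WithLp.equiv 2 (↥H2 × ↥H2)) y).1 : L2)⟫ = 0 := by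
    rw [← inner_conj_symm]
    rw [inner_H2_flipL2 (U.M_mem_H2 ((WithLp.equiv 2 (↥H2 × ↥H2)) y).1.2)
      ((WithLp.equiv 2 (↥H2 × ↥H2)) x).2.2]
    simp
  rw [hcross1, hcross2, U.inner_M_M, inner_flipL2, add_zero, zero_add]
  rw [WithLp.prod_inner_apply, Submodule.coe_inner, Submodule.coe_inner]
  rfl

/-- `J` as a linear isometry into `L²`. -/
def Jiso : WithLp 2 (↥H2 × ↥H2) →ₗᵢ[ℂ] L2 :=
  LinearMap.isometryOfInner (𝕜 := ℂ) (E := WithLp 2 (↥H2 × ↥H2)) (E' := L2) U.Jlin U.inner_Jlin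

lemma Jiso_apply (x : WithLp 2 (↥H2 × ↥H2)) : U.Jiso x = U.Jlin x := rfl

lemma Jlin_mem_KP (x : WithLp 2 (↥H2 × ↥H2)) : U.Jlin x ∈ U.KP := by
  rw [KP, Submodule.mem_orthogonal]
  intro k hk
  obtain ⟨hk1, hk2⟩ := Submodule.mem_inf.mp hk
  rw [Jlin_apply, inner_add_right]
  have h1 : ⟪k, U.M (((WithLp.equiv 2 (↥H2 × ↥H2)) x).1 : L2)⟫ = 0 := by
    rw [← inner_conj_symm]
    have hmem : U.M (((WithLp.equiv 2 (↥H2 × ↥H2)) x).1 : L2) ∈ U.uH2 :=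
      ⟨_, ((WithLp.equiv 2 (↥H2 × ↥H2)) x).1.2, rfl⟩
    rw [(Submodule.mem_orthogonal _ _).1 hk2 _ hmem, map_zero]
  have h2 : ⟪k, flipL2 ((((WithLp.equiv 2 (↥H2 × ↥H2)) x).2 : L2))⟫ = 0 :=
    inner_H2_flipL2 hk1 ((WithLp.equiv 2 (↥H2 × ↥H2)) x).2.2
  rw [h1, h2, add_zero]

/-- `J` as a linear isometry into `K_u^⊥`. -/
def Jres : WithLp 2 (↥H2 × ↥H2) →ₗᵢ[ℂ] U.KP where
  toLinearMap := U.Jlin.codRestrict U.KP U.Jlin_mem_KP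
  norm_map' x := by
    show ‖U.Jlin x‖ = ‖x‖
    exact U.Jiso.norm_map x

lemma Jres_coe (x : WithLp 2 (↥H2 × ↥H2)) : (U.Jres x : L2) = U.Jlin x := rfl

lemma Jres_surjective : Function.Surjective U.Jres := by
  intro f
  set Rng : Submodule ℂ L2 := LinearMap.range U.Jiso.toLinearMap with hRng
  have hset : (Rng : Set L2) = Set.range U.Jiso := by
    rw [hRng, LinearMap.coe_range]
    rfl
  have hclosed : IsClosed (Rng : Set L2) := by
    rw [hset]
    exact U.Jiso.isometry.isClosedEmbedding.isClosed_range
  haveI : CompleteSpace Rng := hclosed.completeSpace_coe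
  set p : L2 := (Rng.orthogonalProjectionOnto (f : L2) : L2) with hp
  have hpR : p ∈ Rng := (Rng.orthogonalProjectionOnto (f : L2)).2
  set q : L2 := (f : L2) - p with hqdef
  have hq : q ∈ Rngᗮ := Submodule.sub_starProjection_mem_orthogonal (K := Rng) (f : L2)
  have hbasis : ∀ n : ℤ, n < 0 → ((fourierBasis : HilbertBasis ℤ ℂ L2) n) ∈ Rng := by
    intro n hn
    refine ⟨(WithLp.equiv 2 (↥H2 × ↥H2)).symm
      (0, ⟨(fourierBasis : HilbertBasis ℤ ℂ L2) (-1 - n), fourierBasis_mem_H2 (by omega)⟩), ?_⟩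
    show U.Jlin _ = _
    rw [Jlin_apply]
    simp only [Equiv.apply_symm_apply]
    show U.M ((0 : ↥H2) : L2)
        + flipL2 (((⟨(fourierBasis : HilbertBasis ℤ ℂ L2) (-1 - n),
            fourierBasis_mem_H2 (by omega)⟩ : ↥H2) : L2))
      = (fourierBasis : HilbertBasis ℤ ℂ L2) n
    rw [show ((0 : ↥H2) : L2) = 0 from rfl, map_zero, zero_add]
    show flipL2 ((fourierBasis : HilbertBasis ℤ ℂ L2) (-1 - n)) = _
    rw [flipL2_fourierBasis, show (-1 - (-1 - n) : ℤ) = n by ring]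
  have hqH2 : q ∈ H2 := by
    intro n hn
    rw [repr_apply_eq_inner]
    exact (Submodule.mem_orthogonal _ _).1 hq _ (hbasis n hn)
  have hqU : q ∈ (U.uH2)ᗮ := by
    rw [Submodule.mem_orthogonal]
    intro v hv
    obtain ⟨h, hh, rfl⟩ := hv
    have hmem : (U.M : L2 →ₗ[ℂ] L2) h ∈ Rng := by
      refine ⟨(WithLp.equiv 2 (↥H2 × ↥H2)).symm (⟨h, hh⟩, 0), ?_⟩
      show U.Jlin _ = _
      rw [Jlin_apply]
      simp only [Equiv.apply_symm_apply]
      show U.M ((⟨h, hh⟩ : ↥H2) : L2) + flipL2 ((0 : ↥H2) : L2) = _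
      rw [show ((0 : ↥H2) : L2) = 0 from rfl, flipL2_zero, add_zero]
      rfl
    exact (Submodule.mem_orthogonal _ _).1 hq _ hmem
  have hqKu : q ∈ U.Ku := Submodule.mem_inf.mpr ⟨hqH2, hqU⟩
  have hqKP : q ∈ U.KP := by
    refine Submodule.sub_mem _ f.2 ?_
    obtain ⟨w, hw⟩ := hpR
    rw [← hw]
    exact U.Jlin_mem_KP w
  have hq0 : q = 0 := by
    have := (Submodule.mem_orthogonal _ _).1 hqKP q hqKu
    exact inner_self_eq_zero.mp this
  obtain ⟨x, hx⟩ := hpR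
  refine ⟨x, ?_⟩
  apply Subtype.ext
  rw [Jres_coe]
  have : (f : L2) = p := by
    have := sub_eq_zero.mp (hqdef ▸ hq0)
    exact this
  rw [show U.Jlin x = p from hx, this]

/-- The unitary `H²⊕H² → K_u^⊥`. -/
def Zequiv : WithLp 2 (↥H2 × ↥H2) ≃ₗᵢ[ℂ] U.KP :=
  LinearIsometryEquiv.ofSurjective U.Jres U.Jres_surjective

lemma Zequiv_apply (x : WithLp 2 (↥H2 × ↥H2)) : U.Zequiv x = U.Jres x := rfl

lemma Mz_flip_eq (g : L2) :
    Mz (flipL2 g) = flipL2 (backL2 g) + (fourierBasis.repr g 0) • oneL2 := by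
  refine repr_ext fun n => ?_
  rw [repr_Mz, repr_flipL2, map_add, _root_.map_smul]
  simp only [lp.coeFn_add, Pi.add_apply, lp.coeFn_smul, Pi.smul_apply, smul_eq_mul]
  rw [repr_flipL2, repr_backL2, repr_oneL2]
  have h1 : (-1 - (n - 1) : ℤ) = -n := by ring
  have h2 : (-1 - n + 1 : ℤ) = -n := by ring
  rw [h1, h2]
  by_cases h : n = 0
  · subst h; simp
  · rw [if_neg (by omega), if_neg (by omega), sub_zero, mul_zero, add_zero]

lemma Du_Jres (h0 : U.a0 = 0) (x : WithLp 2 (↥H2 × ↥H2)) :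
    U.Du (U.Jres x) = U.Jres ((WithLp.equiv 2 (↥H2 × ↥H2)).symm
      (Shift ((WithLp.equiv 2 (↥H2 × ↥H2)) x).1,
       (ContinuousLinearMap.adjoint Shift) ((WithLp.equiv 2 (↥H2 × ↥H2)) x).2)) := by
  apply Subtype.ext
  show (U.KP.orthogonalProjectionOnto (Mz (U.Jlin x)) : L2) = _
  rw [Jres_coe]
  refine Submodule.eq_starProjection_of_mem_orthogonal (U.Jlin_mem_KP _) ?_
  set hh := ((WithLp.equiv 2 (↥H2 × ↥H2)) x).1 with hhdef
  set gg := ((WithLp.equiv 2 (↥H2 × ↥H2)) x).2 with ggdef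
  have hexp : U.Jlin ((WithLp.equiv 2 (↥H2 × ↥H2)).symm
      (Shift hh, (ContinuousLinearMap.adjoint Shift) gg))
      = U.M (Mz (hh : L2)) + flipL2 (backL2 (gg : L2)) := by
    rw [Jlin_apply]
    simp only [Equiv.apply_symm_apply]
    rw [Shift_coe, adjoint_Shift_eq, Bshift_coe]
  have hsub : Mz (U.Jlin x) - U.Jlin ((WithLp.equiv 2 (↥H2 × ↥H2)).symm
      (Shift hh, (ContinuousLinearMap.adjoint Shift) gg))
      = (fourierBasis.repr (gg : L2) 0) • oneL2 := by
    rw [hexp, Jlin_apply, ← hhdef, ← ggdef, map_add, U.Mz_M_comm,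
      Mz_flip_eq (gg : L2)]
    abel
  rw [hsub]
  have hKu : (fourierBasis.repr (gg : L2) 0) • oneL2 ∈ U.Ku :=
    Submodule.smul_mem _ _ (U.oneL2_mem_Ku h0)
  exact Submodule.le_orthogonal_orthogonal U.Ku hKu

lemma main (h0 : U.a0 = 0) :
    ∃ Z : U.KP ≃ₗᵢ[ℂ] WithLp 2 (↥H2 × ↥H2),
      ∀ f : U.KP,
        (WithLp.equiv 2 (↥H2 × ↥H2)) (Z (U.Du f))
          = (Shift (((WithLp.equiv 2 (↥H2 × ↥H2)) (Z f)).1),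
             (ContinuousLinearMap.adjoint Shift) (((WithLp.equiv 2 (↥H2 × ↥H2)) (Z f)).2)) := by
  refine ⟨U.Zequiv.symm, fun f => ?_⟩
  set x := U.Zequiv.symm f with hxdef
  have hfx : U.Jres x = f := by
    rw [hxdef, ← Zequiv_apply, LinearIsometryEquiv.apply_symm_apply]
  have h1 : U.Du f = U.Jres ((WithLp.equiv 2 (↥H2 × ↥H2)).symm
      (Shift ((WithLp.equiv 2 (↥H2 × ↥H2)) x).1,
       (ContinuousLinearMap.adjoint Shift) ((WithLp.equiv 2 (↥H2 × ↥H2)) x).2)) := by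
    rw [← hfx]
    exact U.Du_Jres h0 x
  have h2 : U.Zequiv.symm (U.Du f) = (WithLp.equiv 2 (↥H2 × ↥H2)).symm
      (Shift ((WithLp.equiv 2 (↥H2 × ↥H2)) x).1,
       (ContinuousLinearMap.adjoint Shift) ((WithLp.equiv 2 (↥H2 × ↥H2)) x).2) := by
    rw [h1, ← Zequiv_apply, LinearIsometryEquiv.symm_apply_apply]
  rw [h2, Equiv.apply_symm_apply]

end InnerData

/-- If `u(0) = 0` then `D_u` is unitarily equivalent to `S ⊕ S^*` on
`H² ⊕ H²`; consequently any two such duals are unitarily equivalent. -/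
theorem Du_unitarily_equiv_shift_oplus_backward (U : InnerData) (h0 : U.a0 = 0) :
    (∃ Z : U.KP ≃ₗᵢ[ℂ] WithLp 2 (↥H2 × ↥H2),
      ∀ f : U.KP,
        (WithLp.equiv 2 (↥H2 × ↥H2)) (Z (U.Du f))
          = (Shift (((WithLp.equiv 2 (↥H2 × ↥H2)) (Z f)).1),
             (ContinuousLinearMap.adjoint Shift) (((WithLp.equiv 2 (↥H2 × ↥H2)) (Z f)).2))) ∧
    (∀ V : InnerData, V.a0 = 0 →
      ∃ Z : U.KP ≃ₗᵢ[ℂ] V.KP, ∀ f : U.KP, Z (U.Du f) = V.Du (Z f)) := by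
  refine ⟨U.main h0, fun V hV => ?_⟩
  obtain ⟨ZU, hZU⟩ := U.main h0
  obtain ⟨ZV, hZV⟩ := V.main hV
  refine ⟨ZU.trans ZV.symm, fun f => ?_⟩
  have h1 : ZU (U.Du f) = (WithLp.equiv 2 (↥H2 × ↥H2)).symm
      (Shift (((WithLp.equiv 2 (↥H2 × ↥H2)) (ZU f)).1),
       (ContinuousLinearMap.adjoint Shift) (((WithLp.equiv 2 (↥H2 × ↥H2)) (ZU f)).2)) :=
    (Equiv.eq_symm_apply _).mpr (hZU f)
  have h2 : ZV (V.Du (ZV.symm (ZU f))) = (WithLp.equiv 2 (↥H2 × ↥H2)).symm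
      (Shift (((WithLp.equiv 2 (↥H2 × ↥H2)) (ZU f)).1),
       (ContinuousLinearMap.adjoint Shift) (((WithLp.equiv 2 (↥H2 × ↥H2)) (ZU f)).2)) := by
    have := hZV (ZV.symm (ZU f))
    rw [LinearIsometryEquiv.apply_symm_apply] at this
    exact (Equiv.eq_symm_apply _).mpr this
  have h3 : V.Du (ZV.symm (ZU f)) = ZV.symm (ZU (U.Du f)) := by
    rw [h1, ← h2, LinearIsometryEquiv.symm_apply_apply]
  simp only [LinearIsometryEquiv.trans_apply]
  rw [h3]

end Paper
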